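/- arXiv:math/0410022 — 5 statements merged into one kernel-verified Lean document; each statement's English description precedes it below -/
import Mathlib

section
/- Let h be a C¹ real function with h(0) = 0 and 1 + h(X) > 0 near 0. The unique solution of the differential equation (1 + h(X) − h'(X)·X)/(1 + h(X))³ = 1 with boundary condition h(0) = 0 is h ≡ 0. -/
/-- The unique `C¹` solution of `(1 + h(X) - h'(X)·X)/(1 + h(X))³ = 1` near `0`
with `h(0) = 0` and `1 + h > 0` is `h ≡ 0`. -/
theorem urabe_ode_trivial_solution (h : ℝ → ℝ) (hC1 : ContDiff ℝ 1 h)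
    (ε : ℝ) (hε : 0 < ε) (h0 : h 0 = 0)
    (hpos : ∀ X ∈ Set.Ioo (-ε) ε, 1 + h X > 0)
    (hode : ∀ X ∈ Set.Ioo (-ε) ε,
      (1 + h X - deriv h X * X) / (1 + h X)^3 = 1) :
    ∀ X ∈ Set.Ioo (-ε) ε, h X = 0 := by
  intro X hX
  have hdh : Differentiable ℝ h := hC1.differentiable one_ne_zero
  set s := Set.Ioo (-ε : ℝ) ε with hs_def
  have hs : Convex ℝ s := convex_Ioo _ _
  have hso : IsOpen s := isOpen_Ioo
  set f : ℝ → ℝ := fun x => x ^ 2 / (1 + h x) ^ 2 - x ^ 2 with hf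
  have key : ∀ x ∈ s, HasDerivAt f 0 x := by
    intro x hx
    have hposx := hpos x hx
    have hne : (1 + h x) ≠ 0 := ne_of_gt hposx
    have h1 : HasDerivAt (fun y => 1 + h y) (deriv h x) x :=
      ((hdh x).hasDerivAt).const_add 1
    have h2 : HasDerivAt (fun y => (1 + h y) ^ 2)
        (2 * (1 + h x) * deriv h x) x := by
      have := h1.fun_pow 2
      simpa [mul_comm, mul_assoc, mul_left_comm] using this
    have h3 : HasDerivAt (fun y : ℝ => y ^ 2) (2 * x) x := by
      simpa using hasDerivAt_pow 2 x
    have h4 : HasDerivAt (fun y => y ^ 2 / (1 + h y) ^ 2)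
        ((2 * x * (1 + h x) ^ 2 - x ^ 2 * (2 * (1 + h x) * deriv h x)) /
          ((1 + h x) ^ 2) ^ 2) x := h3.div h2 (pow_ne_zero 2 hne)
    have h5 := h4.sub h3
    convert h5 using 1
    · rfl
    · rfl
    · rfl
    have hode' := hode x hx
    have heq : 1 + h x - deriv h x * x = (1 + h x) ^ 3 := by
      field_simp at hode'
      linarith
    field_simp
    linear_combination (-2 * x) * heq
  have hdiff : DifferentiableOn ℝ f s := fun x hx =>
    ((key x hx).differentiableAt).differentiableWithinAt
  have hderiv0 : ∀ x ∈ s, fderivWithin ℝ f s x = 0 := by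
    intro x hx
    rw [fderivWithin_eq_fderiv (hso.uniqueDiffOn x hx) (key x hx).differentiableAt,
      (key x hx).hasFDerivAt.fderiv]
    ext
    simp
  have h0mem : (0 : ℝ) ∈ s := Set.mem_Ioo.mpr ⟨by linarith, hε⟩
  have hconst : f X = f 0 :=
    hs.is_const_of_fderivWithin_eq_zero hdiff hderiv0 hX h0mem
  have hf0 : f 0 = 0 := by simp [hf]
  rw [hf0] at hconst
  rcases eq_or_ne X 0 with rfl | hX0
  · exact h0
  · have hposX := hpos X hX
    have hne : (1 + h X) ≠ 0 := ne_of_gt hposX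
    have : X ^ 2 / (1 + h X) ^ 2 = X ^ 2 := by
      have := hconst
      simp only [hf] at this
      linarith
    rw [div_eq_iff (pow_ne_zero 2 hne)] at this
    have hXsq : X ^ 2 ≠ 0 := pow_ne_zero 2 hX0
    have hsq : (1 + h X) ^ 2 = 1 := by
      have := mul_left_cancel₀ hXsq (this.symm.trans (mul_one (X^2)).symm)
      linarith [this]
    nlinarith
end

section
/- Let g̃(u) = X/(1 + h(X)) where u = X + H(X), H'(X) = h(X), h is C³ with h(0) = 0 and 1 + h > 0 near 0. Then g̃'(0) = 1, g̃''(0) = −3h'(0), and g̃'''(0) = −4h''(0) + 15h'(0)². -/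
open Filter Set Topology

/-- If `g̃(u) = X/(1 + h(X))` under the change of variable `u = X + H(X)`, with
`H' = h`, `h(0) = H(0) = 0`, `h` of class `C³` and `1 + h > 0` near `0`, then
`g̃'(0) = 1`, `g̃''(0) = -3h'(0)` and `g̃'''(0) = -4h''(0) + 15h'(0)²`. -/
theorem urabe_gtilde_derivatives (h H gt : ℝ → ℝ) (hC3 : ContDiff ℝ 3 h)
    (ε : ℝ) (hε : 0 < ε) (h0 : h 0 = 0) (H0 : H 0 = 0)
    (hH : ∀ X : ℝ, HasDerivAt H (h X) X)
    (hpos : ∀ X ∈ Set.Ioo (-ε) ε, 1 + h X > 0)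
    (hgt : ∀ X ∈ Set.Ioo (-ε) ε, gt (X + H X) = X / (1 + h X)) :
    deriv gt 0 = 1 ∧
    iteratedDeriv 2 gt 0 = -3 * deriv h 0 ∧
    iteratedDeriv 3 gt 0 = -4 * iteratedDeriv 2 h 0 + 15 * (deriv h 0)^2 := by
  -- notation
  set h₁ := deriv h with h₁def
  set h₂ := deriv h₁ with h₂def
  have hdiff : Differentiable ℝ h := hC3.differentiable (by norm_num)
  have hh1 : ∀ X, HasDerivAt h (h₁ X) X := fun X => (hdiff X).hasDerivAt
  have h₁C2 : ContDiff ℝ 2 h₁ := by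
    have : ContDiff ℝ (2 + 1) h := by norm_num; exact hC3
    exact (contDiff_succ_iff_deriv.1 this).2.2
  have h₁diff : Differentiable ℝ h₁ := h₁C2.differentiable (by norm_num)
  have hh2 : ∀ X, HasDerivAt h₁ (h₂ X) X := fun X => (h₁diff X).hasDerivAt
  have h₂C1 : ContDiff ℝ 1 h₂ := by
    have : ContDiff ℝ (1 + 1) h₁ := by norm_num; exact h₁C2
    exact (contDiff_succ_iff_deriv.1 this).2.2
  have h₂diff : Differentiable ℝ h₂ := h₂C1.differentiable (by norm_num)
  have hh3 : ∀ X, HasDerivAt h₂ (deriv h₂ X) X := fun X => (h₂diff X).hasDerivAt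
  set φ : ℝ → ℝ := fun X => X + H X with φdef
  have hφd : ∀ X, HasDerivAt φ (1 + h X) X := fun X => (hasDerivAt_id X).add (hH X)
  have φ0 : φ 0 = 0 := by simp [φdef, H0]
  have HC4 : ContDiff ℝ (3 + 1) H := by
    rw [contDiff_succ_iff_deriv]
    refine ⟨fun X => (hH X).differentiableAt, by simp, ?_⟩
    have : deriv H = h := funext fun X => (hH X).deriv
    rw [this]; exact hC3
  have φC3 : ContDiff ℝ 3 φ := contDiff_id.add (HC4.of_le (by norm_num))
  have φcont : Continuous φ := φC3.continuous
  -- inverse function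
  have hfd : HasFDerivAt φ ((ContinuousLinearEquiv.refl ℝ ℝ : ℝ ≃L[ℝ] ℝ) : ℝ →L[ℝ] ℝ) 0 := by
    have h1 : HasDerivAt φ 1 0 := by simpa [h0] using hφd 0
    have := h1.hasFDerivAt
    convert this using 1
    · rfl
    ext; simp
  have hφs : HasStrictFDerivAt φ ((ContinuousLinearEquiv.refl ℝ ℝ : ℝ ≃L[ℝ] ℝ) : ℝ →L[ℝ] ℝ) 0 :=
    φC3.contDiffAt.hasStrictFDerivAt' hfd (by norm_num)
  set g : ℝ → ℝ := hφs.localInverse φ _ 0 with gdef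
  have gC3 : ContDiffAt ℝ 3 g 0 := by
    have := ContDiffAt.to_localInverse (f := φ) (n := 3) φC3.contDiffAt hfd (by norm_num)
    rw [φ0] at this
    exact this
  have g0 : g 0 = 0 := by
    have := hφs.localInverse_apply_image
    rwa [φ0] at this
  have gright : ∀ᶠ u in 𝓝 (0:ℝ), φ (g u) = u := by
    have := hφs.eventually_right_inverse
    rwa [φ0] at this
  have gtend : Filter.Tendsto g (𝓝 0) (𝓝 0) := by
    have := hφs.localInverse_tendsto
    rwa [φ0] at this
  have hIoo : Set.Ioo (-ε) ε ∈ 𝓝 (0:ℝ) := Ioo_mem_nhds (by linarith) hε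
  -- gt is C³ at 0
  set p : ℝ → ℝ := fun X => X / (1 + h X) with pdef
  have pC3 : ContDiffAt ℝ 3 p 0 :=
    contDiffAt_id.div (contDiffAt_const.add hC3.contDiffAt) (by simp [h0])
  have gt_eq : gt =ᶠ[𝓝 (0:ℝ)] fun u => p (g u) := by
    filter_upwards [gright, gtend.eventually_mem hIoo] with u hu hmem
    have h1 := hgt (g u) hmem
    rw [show g u + H (g u) = φ (g u) from rfl, hu] at h1
    exact h1
  have gtC3 : ContDiffAt ℝ 3 gt 0 := by
    have : ContDiffAt ℝ 3 (p ∘ g) 0 :=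
      ContDiffAt.comp 0 (by rw [g0]; exact pC3) gC3
    exact this.congr_of_eventuallyEq gt_eq
  -- the open set where gt is C³
  obtain ⟨t, ht_mem, ht⟩ := gtC3.contDiffOn (le_refl 3) (by simp)
  set s := interior t with sdef
  have s_open : IsOpen s := isOpen_interior
  have s_mem : (0:ℝ) ∈ s := mem_interior_iff_mem_nhds.2 ht_mem
  have hs : ContDiffOn ℝ 3 gt s := ht.mono interior_subset
  set G₁ := deriv gt with G₁def
  set G₂ := deriv G₁ with G₂def
  set G₃ := deriv G₂ with G₃def
  have d0 : ∀ x ∈ s, DifferentiableAt ℝ gt x := fun x hx =>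
    (hs.differentiableOn (by norm_num)).differentiableAt (s_open.mem_nhds hx)
  have c1 : ContDiffOn ℝ 2 G₁ s := hs.deriv_of_isOpen s_open (by norm_num)
  have d1 : ∀ x ∈ s, DifferentiableAt ℝ G₁ x := fun x hx =>
    (c1.differentiableOn (by norm_num)).differentiableAt (s_open.mem_nhds hx)
  have c2 : ContDiffOn ℝ 1 G₂ s := c1.deriv_of_isOpen s_open (by norm_num)
  have d2 : ∀ x ∈ s, DifferentiableAt ℝ G₂ x := fun x hx =>
    (c2.differentiableOn (by norm_num)).differentiableAt (s_open.mem_nhds hx)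
  have hmem_s : ∀ᶠ X in 𝓝 (0:ℝ), φ X ∈ s := by
    have hφt : Filter.Tendsto φ (𝓝 0) (𝓝 0) := by
      have := φcont.tendsto 0
      rwa [φ0] at this
    exact hφt.eventually_mem (s_open.mem_nhds s_mem)
  have epos : ∀ᶠ X in 𝓝 (0:ℝ), 0 < 1 + h X := by
    filter_upwards [hIoo] with X hX using hpos X hX
  set q₁ : ℝ → ℝ := fun X => (1 * (1 + h X) - X * h₁ X) / (1 + h X)^2 with q₁def
  set q₂ : ℝ → ℝ := fun X =>
      ((-(X * h₂ X)) * (1 + h X)^2 - ((1 + h X) - X * h₁ X) * (2 * (1 + h X) * h₁ X))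
        / (1 + h X)^4 with q₂def
  have E0 : (fun X => gt (φ X)) =ᶠ[𝓝 (0:ℝ)] p := by
    filter_upwards [hIoo] with X hX using hgt X hX
  -- first derivative identity
  have hL0 : ∀ᶠ X in 𝓝 (0:ℝ), deriv (fun X => gt (φ X)) X = G₁ (φ X) * (1 + h X) := by
    filter_upwards [hmem_s] with X hX
    exact ((d0 _ hX).hasDerivAt.comp X (hφd X)).deriv
  have hp' : ∀ᶠ X in 𝓝 (0:ℝ), deriv p X = q₁ X := by
    filter_upwards [epos] with X hX
    have hd : HasDerivAt p ((1 * (1 + h X) - X * ((0:ℝ) + h₁ X)) / (1 + h X)^2) X :=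
      (hasDerivAt_id' X).div ((hasDerivAt_const X 1).add (hh1 X)) (ne_of_gt hX)
    rw [hd.deriv, q₁def]
    ring_nf
  have E1 : (fun X => G₁ (φ X) * (1 + h X)) =ᶠ[𝓝 (0:ℝ)] q₁ := by
    filter_upwards [E0.deriv, hL0, hp'] with X e0 e1 e2
    rw [← e1, e0, e2]
  -- second derivative identity
  have hL1 : ∀ᶠ X in 𝓝 (0:ℝ), deriv (fun X => G₁ (φ X) * (1 + h X)) X =
      (G₂ (φ X) * (1 + h X)) * (1 + h X) + G₁ (φ X) * h₁ X := by
    filter_upwards [hmem_s] with X hX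
    exact (((d1 _ hX).hasDerivAt.comp X (hφd X)).mul ((hh1 X).const_add 1)).deriv
  have hq1' : ∀ᶠ X in 𝓝 (0:ℝ), deriv q₁ X = q₂ X := by
    filter_upwards [epos] with X hX
    have hne : (1 + h X) ≠ 0 := ne_of_gt hX
    have hN : HasDerivAt (fun X => 1 * (1 + h X) - X * h₁ X)
        (1 * h₁ X - (1 * h₁ X + X * h₂ X)) X :=
      (((hh1 X).const_add 1).const_mul 1).sub ((hasDerivAt_id' X).mul (hh2 X))
    have hD : HasDerivAt (fun X => (1 + h X)^2) (((2:ℕ):ℝ) * (1 + h X)^(2-1) * h₁ X) X :=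
      ((hh1 X).const_add 1).pow 2
    have hd : HasDerivAt q₁
        (((1 * h₁ X - (1 * h₁ X + X * h₂ X)) * (1 + h X)^2
          - (1 * (1 + h X) - X * h₁ X) * (((2:ℕ):ℝ) * (1 + h X)^(2-1) * h₁ X))
          / ((1 + h X)^2)^2) X := hN.div hD (pow_ne_zero 2 hne)
    rw [hd.deriv]
    show _ = (-(X * h₂ X) * (1 + h X) ^ 2 - (1 + h X - X * h₁ X) * (2 * (1 + h X) * h₁ X))
        / (1 + h X)^4
    rw [div_eq_div_iff (pow_ne_zero 2 (pow_ne_zero 2 hne)) (pow_ne_zero 4 hne)]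
    push_cast
    norm_num
    exact Or.inl (by ring)
  have E2 : (fun X => (G₂ (φ X) * (1 + h X)) * (1 + h X) + G₁ (φ X) * h₁ X) =ᶠ[𝓝 (0:ℝ)] q₂ := by
    filter_upwards [E1.deriv, hL1, hq1'] with X e0 e1 e2
    rw [← e1, e0, e2]
  -- evaluate at 0
  have hφ0s : φ 0 ∈ s := by rwa [φ0]
  have r1 : G₁ 0 = 1 := by
    have := E1.self_of_nhds
    simp [φ0, h0, q₁def] at this
    linarith
  have r2 : G₂ 0 = -3 * h₁ 0 := by
    have := E2.self_of_nhds
    simp [φ0, h0, q₂def, r1] at this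
    linarith
  -- third derivative
  have hone : HasDerivAt (fun X => 1 + h X) (h₁ 0) 0 := (hh1 0).const_add 1
  have hA : HasDerivAt (fun X => G₂ (φ X)) (G₃ (φ 0) * (1 + h 0)) 0 :=
    (d2 _ hφ0s).hasDerivAt.comp 0 (hφd 0)
  have hB : HasDerivAt (fun X => G₁ (φ X)) (G₂ (φ 0) * (1 + h 0)) 0 :=
    (d1 _ hφ0s).hasDerivAt.comp 0 (hφd 0)
  have hL2 : HasDerivAt (fun X => (G₂ (φ X) * (1 + h X)) * (1 + h X) + G₁ (φ X) * h₁ X)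
      ((((G₃ (φ 0) * (1 + h 0)) * (1 + h 0) + G₂ (φ 0) * h₁ 0) * (1 + h 0)
        + (G₂ (φ 0) * (1 + h 0)) * h₁ 0)
       + ((G₂ (φ 0) * (1 + h 0)) * h₁ 0 + G₁ (φ 0) * h₂ 0)) 0 :=
    ((hA.mul hone).mul hone).add (hB.mul (hh2 0))
  have n1 : HasDerivAt (fun X : ℝ => -(X * h₂ X)) (-(1 * h₂ 0 + 0 * deriv h₂ 0)) 0 :=
    ((hasDerivAt_id' 0).mul (hh3 0)).neg
  have n2 : HasDerivAt (fun X => (1 + h X)^2) (((2:ℕ):ℝ) * (1 + h 0)^(2-1) * h₁ 0) 0 :=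
    hone.pow 2
  have m1 : HasDerivAt (fun X => (1 + h X) - X * h₁ X) (h₁ 0 - (1 * h₁ 0 + 0 * h₂ 0)) 0 :=
    hone.sub ((hasDerivAt_id' 0).mul (hh2 0))
  have m2 : HasDerivAt (fun X => 2 * (1 + h X) * h₁ X)
      ((2 * h₁ 0) * h₁ 0 + (2 * (1 + h 0)) * h₂ 0) 0 :=
    (hone.const_mul 2).mul (hh2 0)
  have hD2 : HasDerivAt (fun X => (1 + h X)^4) (((4:ℕ):ℝ) * (1 + h 0)^(4-1) * h₁ 0) 0 :=
    hone.pow 4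
  have hq2d : HasDerivAt q₂ (6 * h₁ 0 * h₁ 0 - 3 * h₂ 0) 0 := by
    have hd := ((n1.mul n2).sub (m1.mul m2)).div hD2
      (show ((1:ℝ) + h 0)^4 ≠ 0 by simp [h0])
    convert hd using 1
    · rfl
    · rfl
    · rfl
    simp [h0]
    ring
  have e3 : deriv (fun X => (G₂ (φ X) * (1 + h X)) * (1 + h X) + G₁ (φ X) * h₁ X) 0
      = deriv q₂ 0 := E2.deriv_eq
  rw [hL2.deriv, hq2d.deriv, φ0, h0, r1, r2] at e3
  have r3 : G₃ 0 = -4 * h₂ 0 + 15 * (h₁ 0)^2 := by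
    ring_nf at e3 ⊢
    linarith
  have i2 : ∀ f : ℝ → ℝ, iteratedDeriv 2 f = deriv (deriv f) := fun f => by
    rw [iteratedDeriv_eq_iterate]; rfl
  have i3 : ∀ f : ℝ → ℝ, iteratedDeriv 3 f = deriv (deriv (deriv f)) := fun f => by
    rw [iteratedDeriv_eq_iterate]; rfl
  refine ⟨r1, ?_, ?_⟩
  · rw [i2 gt]
    exact r2
  · rw [i3 gt, i2 h]
    exact r3
end

section
/- Under the hypotheses of the previous derivative computation, 5·g̃''(0)² − 3·g̃'(0)·g̃'''(0) = 12·h''(0). -/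
open Filter Topology

/-- With `g̃(u) = X/(1 + h(X))`, `u = X + H(X)`, `H' = h`, `h(0) = 0`, the Schaaf
expression at the center satisfies `5 g̃''(0)² - 3 g̃'(0) g̃'''(0) = 12 h''(0)`. -/
theorem urabe_schaaf_identity (h H gt : ℝ → ℝ) (hC3 : ContDiff ℝ 3 h)
    (ε : ℝ) (hε : 0 < ε) (h0 : h 0 = 0) (H0 : H 0 = 0)
    (hH : ∀ X : ℝ, HasDerivAt H (h X) X)
    (hpos : ∀ X ∈ Set.Ioo (-ε) ε, 1 + h X > 0)
    (hgt : ∀ X ∈ Set.Ioo (-ε) ε, gt (X + H X) = X / (1 + h X)) :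
    5 * (iteratedDeriv 2 gt 0)^2 - 3 * (deriv gt 0) * (iteratedDeriv 3 gt 0)
      = 12 * iteratedDeriv 2 h 0 := by
  -- smoothness of h and its derivatives
  obtain ⟨hdh, -, hch1⟩ : Differentiable ℝ h ∧ _ ∧ ContDiff ℝ 2 (deriv h) := by
    rw [show (3 : WithTop ℕ∞) = 2 + 1 by norm_num, contDiff_succ_iff_deriv] at hC3
    exact hC3
  obtain ⟨hdh1, -, hch2⟩ : Differentiable ℝ (deriv h) ∧ _ ∧
      ContDiff ℝ 1 (deriv (deriv h)) := by
    rw [show (2 : WithTop ℕ∞) = 1 + 1 by norm_num, contDiff_succ_iff_deriv] at hch1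
    exact hch1
  have hdh2 : Differentiable ℝ (deriv (deriv h)) := hch2.differentiable one_ne_zero
  have hC3' : ContDiff ℝ 3 h := by
    rw [show (3 : WithTop ℕ∞) = 2 + 1 by norm_num, contDiff_succ_iff_deriv]
    exact ⟨hdh, by simp, hch1⟩
  -- the change of variables u and its local inverse v
  have hH4 : ContDiff ℝ 4 H := by
    rw [show (4 : WithTop ℕ∞) = 3 + 1 by norm_num, contDiff_succ_iff_deriv]
    refine ⟨fun x => (hH x).differentiableAt, by simp, ?_⟩
    have : deriv H = h := funext fun x => (hH x).deriv
    rw [this]; exact hC3'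
  set u : ℝ → ℝ := fun X => X + H X with hu_def
  have hu' : ∀ X, HasDerivAt u (1 + h X) X := fun X => (hasDerivAt_id X).add (hH X)
  have u0 : u 0 = 0 := by simp [hu_def, H0]
  have hCu : ContDiffAt ℝ 3 u 0 := ((contDiff_id.add hH4).of_le (by norm_num)).contDiffAt
  have hfd : HasFDerivAt u ((ContinuousLinearEquiv.refl ℝ ℝ :
      ℝ ≃L[ℝ] ℝ) : ℝ →L[ℝ] ℝ) 0 := by
    have h1 : HasDerivAt u 1 0 := by simpa [h0] using hu' 0
    rw [hasDerivAt_iff_hasFDerivAt] at h1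
    exact h1.congr_fderiv (by ext; simp)
  have hn : (3 : WithTop ℕ∞) ≠ 0 := by norm_num
  set v : ℝ → ℝ := hCu.localInverse hfd hn with hv_def
  have hv3 : ContDiffAt ℝ 3 v 0 := by
    have := hCu.to_localInverse (f' := (ContinuousLinearEquiv.refl ℝ ℝ)) hfd hn
    rwa [u0] at this
  have v0 : v 0 = 0 := by
    have := hCu.localInverse_apply_image (f' := (ContinuousLinearEquiv.refl ℝ ℝ)) hfd hn
    rwa [u0] at this
  have hri : ∀ᶠ y in 𝓝 (0:ℝ), u (v y) = y := by
    have := (hCu.hasStrictFDerivAt' hfd hn).eventually_right_inverse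
    rwa [u0] at this
  -- gt is C³ near 0
  have hIoo : Set.Ioo (-ε) ε ∈ 𝓝 (0:ℝ) := Ioo_mem_nhds (by linarith) hε
  have hvmem : ∀ᶠ y in 𝓝 (0:ℝ), v y ∈ Set.Ioo (-ε) ε :=
    hv3.continuousAt.eventually_mem (by rwa [v0])
  set φ : ℝ → ℝ := fun y => v y / (1 + h (v y)) with hφ_def
  have hgtφ : gt =ᶠ[𝓝 (0:ℝ)] φ := by
    filter_upwards [hri, hvmem] with y hy1 hy2
    calc gt y = gt (v y + H (v y)) := by
          rw [show v y + H (v y) = u (v y) from by rw [hu_def], hy1]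
    _ = φ y := hgt _ hy2
  have hφ3 : ContDiffAt ℝ 3 φ 0 := by
    have hh3 : ContDiffAt ℝ 3 (fun y => h (v y)) 0 := by
      have : ContDiffAt ℝ 3 h (v 0) := hC3'.contDiffAt
      exact this.comp 0 hv3
    refine hv3.div (contDiffAt_const.add hh3) ?_
    simp [v0, h0]
  have hgt3 : ContDiffAt ℝ 3 gt 0 := hφ3.congr_of_eventuallyEq hgtφ
  obtain ⟨s, hs, hcs⟩ := hgt3.contDiffOn le_rfl (by simp)
  set t := interior s with ht_def
  have ht : IsOpen t := isOpen_interior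
  have ht0 : t ∈ 𝓝 (0:ℝ) := by rw [ht_def]; exact interior_mem_nhds.mpr hs
  have hct : ContDiffOn ℝ 3 gt t := hcs.mono interior_subset
  have hd0 : ∀ y ∈ t, DifferentiableAt ℝ gt y := fun y hy =>
    ((hct.differentiableOn (by norm_num)).differentiableAt (ht.mem_nhds hy))
  have hc1 : ContDiffOn ℝ 2 (deriv gt) t := hct.deriv_of_isOpen ht (by norm_num)
  have hd1 : ∀ y ∈ t, DifferentiableAt ℝ (deriv gt) y := fun y hy =>
    ((hc1.differentiableOn (by norm_num)).differentiableAt (ht.mem_nhds hy))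
  have hc2 : ContDiffOn ℝ 1 (deriv (deriv gt)) t := hc1.deriv_of_isOpen ht (by norm_num)
  have hd2 : ∀ y ∈ t, DifferentiableAt ℝ (deriv (deriv gt)) y := fun y hy =>
    ((hc2.differentiableOn (by norm_num)).differentiableAt (ht.mem_nhds hy))
  -- differentiate the identity gt(u X)(1 + h X) = X three times
  have hmem : ∀ᶠ X in 𝓝 (0:ℝ), u X ∈ t :=
    (hu' 0).continuousAt.eventually_mem (by rwa [u0])
  have h0t : u 0 ∈ t := by rw [u0]; exact mem_of_mem_nhds ht0
  have hw : ∀ X : ℝ, HasDerivAt (fun Y => 1 + h Y) (deriv h X) X := fun X => by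
    exact ((hasDerivAt_const X (1:ℝ)).add (hdh X).hasDerivAt).congr_deriv (zero_add _)
  have hA : ∀ X, u X ∈ t → HasDerivAt (fun Y => gt (u Y)) (deriv gt (u X) * (1 + h X)) X :=
    fun X hX => (hd0 _ hX).hasDerivAt.comp X (hu' X)
  have hB : ∀ X, u X ∈ t →
      HasDerivAt (fun Y => deriv gt (u Y)) (deriv (deriv gt) (u X) * (1 + h X)) X :=
    fun X hX => (hd1 _ hX).hasDerivAt.comp X (hu' X)
  have e0 : (fun X => gt (u X) * (1 + h X)) =ᶠ[𝓝 (0:ℝ)] fun X => X := by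
    filter_upwards [hIoo] with X hX
    simp only [hu_def]
    rw [hgt X hX, div_mul_cancel₀ _ (hpos X hX).ne']
  have key1 : ∀ X, u X ∈ t → HasDerivAt (fun Y => gt (u Y) * (1 + h Y))
      (deriv gt (u X) * (1 + h X) * (1 + h X) + gt (u X) * deriv h X) X :=
    fun X hX => (hA X hX).mul (hw X)
  have e1 : (fun X => deriv gt (u X) * (1 + h X) * (1 + h X) + gt (u X) * deriv h X)
      =ᶠ[𝓝 (0:ℝ)] fun _ => (1:ℝ) := by
    filter_upwards [hmem, e0.deriv] with X hX hdX
    rw [← (key1 X hX).deriv, hdX, deriv_id'']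
  have key2 : ∀ X, u X ∈ t →
      HasDerivAt (fun Y => deriv gt (u Y) * (1 + h Y) * (1 + h Y) + gt (u Y) * deriv h Y)
      (deriv (deriv gt) (u X) * ((1 + h X) * (1 + h X) * (1 + h X))
        + 3 * (deriv gt (u X) * ((1 + h X) * deriv h X))
        + gt (u X) * deriv (deriv h) X) X := by
    intro X hX
    have hcomb := (((hB X hX).mul (hw X)).mul (hw X)).add
      ((hA X hX).mul (hdh1 X).hasDerivAt)
    exact hcomb.congr_deriv (by simp only [Pi.mul_apply]; ring)
  have e2 : (fun X => deriv (deriv gt) (u X) * ((1 + h X) * (1 + h X) * (1 + h X))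
        + 3 * (deriv gt (u X) * ((1 + h X) * deriv h X))
        + gt (u X) * deriv (deriv h) X) =ᶠ[𝓝 (0:ℝ)] fun _ => (0:ℝ) := by
    filter_upwards [hmem, e1.deriv] with X hX hdX
    rw [← (key2 X hX).deriv, hdX, deriv_const]
  have hC : HasDerivAt (fun Y => deriv (deriv gt) (u Y))
      (deriv (deriv (deriv gt)) (u 0) * (1 + h 0)) 0 :=
    (hd2 _ h0t).hasDerivAt.comp 0 (hu' 0)
  have key3 : HasDerivAt (fun X => deriv (deriv gt) (u X) * ((1 + h X) * (1 + h X) * (1 + h X))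
        + 3 * (deriv gt (u X) * ((1 + h X) * deriv h X))
        + gt (u X) * deriv (deriv h) X)
      (deriv (deriv (deriv gt)) (u 0) * ((1+h 0)*(1+h 0)*(1+h 0)*(1+h 0))
        + 6 * (deriv (deriv gt) (u 0) * ((1+h 0)*(1+h 0)*deriv h 0))
        + 3 * (deriv gt (u 0) * (deriv h 0 * deriv h 0))
        + 4 * (deriv gt (u 0) * ((1+h 0) * deriv (deriv h) 0))
        + gt (u 0) * deriv (deriv (deriv h)) 0) 0 := by
    have hcomb := ((hC.mul (((hw 0).mul (hw 0)).mul (hw 0))).add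
        (((hB 0 h0t).mul ((hw 0).mul (hdh1 0).hasDerivAt)).const_mul (3:ℝ))).add
      ((hA 0 h0t).mul (hdh2 0).hasDerivAt)
    exact hcomb.congr_deriv (by simp only [Pi.mul_apply]; ring)
  have hzero : deriv (fun X => deriv (deriv gt) (u X) * ((1 + h X) * (1 + h X) * (1 + h X))
        + 3 * (deriv gt (u X) * ((1 + h X) * deriv h X))
        + gt (u X) * deriv (deriv h) X) 0 = 0 := by
    rw [e2.deriv_eq]; simp
  have e3 : deriv (deriv (deriv gt)) (u 0) * ((1+h 0)*(1+h 0)*(1+h 0)*(1+h 0))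
        + 6 * (deriv (deriv gt) (u 0) * ((1+h 0)*(1+h 0)*deriv h 0))
        + 3 * (deriv gt (u 0) * (deriv h 0 * deriv h 0))
        + 4 * (deriv gt (u 0) * ((1+h 0) * deriv (deriv h) 0))
        + gt (u 0) * deriv (deriv (deriv h)) 0 = 0 := by
    rw [← key3.deriv]; exact hzero
  -- values at 0
  have vg0 : gt 0 = 0 := by
    have := e0.self_of_nhds
    simp only [u0, h0] at this
    linarith
  have vg1 : deriv gt 0 = 1 := by
    have := e1.self_of_nhds
    simp only [u0, h0, vg0] at this
    linarith
  have vg2 : deriv (deriv gt) 0 = -3 * deriv h 0 := by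
    have := e2.self_of_nhds
    simp only [u0, h0, vg0, vg1] at this
    linarith
  rw [u0, h0, vg0, vg1, vg2] at e3
  -- rewrite iterated derivatives and conclude
  have i2 : iteratedDeriv 2 gt = deriv (deriv gt) := by
    rw [show (2:ℕ) = 1 + 1 from rfl, iteratedDeriv_succ, iteratedDeriv_one]
  have i3 : iteratedDeriv 3 gt = deriv (deriv (deriv gt)) := by
    rw [show (3:ℕ) = 2 + 1 from rfl, iteratedDeriv_succ,
      show (2:ℕ) = 1 + 1 from rfl, iteratedDeriv_succ, iteratedDeriv_one]
  have i2h : iteratedDeriv 2 h = deriv (deriv h) := by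
    rw [show (2:ℕ) = 1 + 1 from rfl, iteratedDeriv_succ, iteratedDeriv_one]
  rw [i2, i3, i2h, vg1, vg2]
  nlinarith [e3]
end

section
/- Let f, g be C³ near 0 with g(0) = 0, F(x) = ∫₀ˣ f(s) ds, and g̃(u) = g(x)e^(F(x)) where u = ∫₀ˣ e^(F(s)) ds. Then g̃'(0) = g'(0), g̃''(0) = g''(0) + f(0)g'(0), and if g'(0) = 1 then g̃'''(0) = g'''(0) + 2f'(0) − f(0)². -/
open Topology Filter


open intervalIntegral in
/-- Corollary 2-10: with `F(x) = ∫₀ˣ f`, `u = ∫₀ˣ e^(F(s)) ds` and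
`g̃(u) = g(x)·e^(F(x))`, one has `g̃'(0) = g'(0)`,
`g̃''(0) = g''(0) + f(0)·g'(0)`, and, when `g'(0) = 1`,
`g̃'''(0) = g'''(0) + 2f'(0) - f(0)²`. -/
theorem gtilde_derivatives_at_zero (f g : ℝ → ℝ) (ε : ℝ) (hε : 0 < ε)
    (hf : ContDiffOn ℝ 3 f (Set.Ioo (-ε) ε)) (hg : ContDiffOn ℝ 3 g (Set.Ioo (-ε) ε))
    (hg0 : g 0 = 0)
    (F : ℝ → ℝ) (hF : ∀ y : ℝ, F y = ∫ s in (0:ℝ)..y, f s)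
    (φ : ℝ → ℝ) (hφ : ∀ y : ℝ, φ y = ∫ s in (0:ℝ)..y, Real.exp (F s))
    (gt : ℝ → ℝ) (hgt : ∀ y ∈ Set.Ioo (-ε) ε, gt (φ y) = g y * Real.exp (F y)) :
    deriv gt 0 = deriv g 0 ∧
    iteratedDeriv 2 gt 0 = iteratedDeriv 2 g 0 + f 0 * deriv g 0 ∧
    (deriv g 0 = 1 →
      iteratedDeriv 3 gt 0 = iteratedDeriv 3 g 0 + 2 * deriv f 0 - (f 0)^2) := by
  classical
  set s : Set ℝ := Set.Ioo (-ε) ε with hsdef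
  have hs_open : IsOpen s := isOpen_Ioo
  have h0s : (0:ℝ) ∈ s := ⟨by linarith, hε⟩
  have hconn : ∀ x ∈ s, Set.uIcc (0:ℝ) x ⊆ s := fun x hx =>
    Set.OrdConnected.uIcc_subset Set.ordConnected_Ioo h0s hx
  have hf_c : ContinuousOn f s := hf.continuousOn
  have hF0 : F 0 = 0 := by rw [hF]; simp
  have hφ0 : φ 0 = 0 := by rw [hφ]; simp
  -- derivative of F
  have hFd : ∀ x ∈ s, HasDerivAt F (f x) x := by
    intro x hx
    have hint : IntervalIntegrable f MeasureTheory.volume 0 x :=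
      (hf_c.mono (hconn x hx)).intervalIntegrable
    have h1 := intervalIntegral.integral_hasDerivAt_right hint
      (ContinuousOn.stronglyMeasurableAtFilter hs_open hf_c x hx)
      ((hf_c x hx).continuousAt (hs_open.mem_nhds hx))
    exact h1.congr_of_eventuallyEq (Filter.Eventually.of_forall fun y => hF y)
  have hF_c : ContinuousOn F s := fun x hx =>
    ((hFd x hx).differentiableAt.continuousAt).continuousWithinAt
  have hE_c : ContinuousOn (fun x => Real.exp (F x)) s :=
    Real.continuous_exp.comp_continuousOn hF_c
  -- derivative of φ
  have hφd : ∀ x ∈ s, HasDerivAt φ (Real.exp (F x)) x := by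
    intro x hx
    have hint : IntervalIntegrable (fun x => Real.exp (F x)) MeasureTheory.volume 0 x :=
      (hE_c.mono (hconn x hx)).intervalIntegrable
    have h1 := intervalIntegral.integral_hasDerivAt_right hint
      (ContinuousOn.stronglyMeasurableAtFilter hs_open hE_c x hx)
      ((hE_c x hx).continuousAt (hs_open.mem_nhds hx))
    exact h1.congr_of_eventuallyEq (Filter.Eventually.of_forall fun y => hφ y)
  have hωne : ∀ m : ℕ, ((m : WithTop ℕ∞) = (⊤ : ℕ∞) → AnalyticOn ℝ F s) := by
    intro m h; exact absurd h (by exact_mod_cast (by simp : (m : ℕ∞) ≠ ⊤))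
  -- smoothness of F and φ
  have hFC1 : ContDiffOn ℝ 1 F s := by
    rw [show (1 : WithTop ℕ∞) = 0 + 1 from rfl, contDiffOn_succ_iff_deriv_of_isOpen hs_open]
    refine ⟨fun x hx => (hFd x hx).differentiableAt.differentiableWithinAt,
      by intro h; exact absurd h (by simp), ?_⟩
    exact (hf.of_le (by norm_num)).congr fun x hx => (hFd x hx).deriv
  have hφC : ContDiffOn ℝ 2 φ s := by
    rw [show (2 : WithTop ℕ∞) = 1 + 1 from rfl, contDiffOn_succ_iff_deriv_of_isOpen hs_open]
    refine ⟨fun x hx => (hφd x hx).differentiableAt.differentiableWithinAt,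
      by intro h; exact absurd h (by simp), ?_⟩
    exact hFC1.exp.congr fun x hx => (hφd x hx).deriv
  -- derivatives of g and f
  have hg1 : ∀ x ∈ s, HasDerivAt g (deriv g x) x := fun x hx =>
    ((hg.differentiableOn (by norm_num)).differentiableAt (hs_open.mem_nhds hx)).hasDerivAt
  have hgdC : ContDiffOn ℝ 2 (deriv g) s := by
    have := (contDiffOn_succ_iff_deriv_of_isOpen (n := 2) hs_open).1
      (by exact_mod_cast hg : ContDiffOn ℝ (2 + 1) g s)
    exact this.2.2
  have hg2 : ∀ x ∈ s, HasDerivAt (deriv g) (deriv (deriv g) x) x := fun x hx =>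
    ((hgdC.differentiableOn (by norm_num)).differentiableAt (hs_open.mem_nhds hx)).hasDerivAt
  have hgddC : ContDiffOn ℝ 1 (deriv (deriv g)) s := by
    have := (contDiffOn_succ_iff_deriv_of_isOpen (n := 1) hs_open).1
      (by exact_mod_cast hgdC : ContDiffOn ℝ (1 + 1) (deriv g) s)
    exact this.2.2
  have hg3 : ∀ x ∈ s, HasDerivAt (deriv (deriv g)) (deriv (deriv (deriv g)) x) x := fun x hx =>
    ((hgddC.differentiableOn (by norm_num)).differentiableAt (hs_open.mem_nhds hx)).hasDerivAt
  have hf1 : ∀ x ∈ s, HasDerivAt f (deriv f x) x := fun x hx =>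
    ((hf.differentiableOn (by norm_num)).differentiableAt (hs_open.mem_nhds hx)).hasDerivAt
  have hfdC : ContDiffOn ℝ 2 (deriv f) s := by
    have := (contDiffOn_succ_iff_deriv_of_isOpen (n := 2) hs_open).1
      (by exact_mod_cast hf : ContDiffOn ℝ (2 + 1) f s)
    exact this.2.2
  have hf2 : ∀ x ∈ s, HasDerivAt (deriv f) (deriv (deriv f) x) x := fun x hx =>
    ((hfdC.differentiableOn (by norm_num)).differentiableAt (hs_open.mem_nhds hx)).hasDerivAt
  -- derivative formulas for the auxiliary functions
  have hGd : ∀ x ∈ s, HasDerivAt (fun y => g y * Real.exp (F y))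
      ((deriv g x + f x * g x) * Real.exp (F x)) x := by
    intro x hx
    have h1 := (hg1 x hx).mul ((hFd x hx).exp)
    exact h1.congr_deriv (by ring)
  have hA₁d : ∀ x ∈ s, HasDerivAt (fun y => deriv g y + f y * g y)
      (deriv (deriv g) x + deriv f x * g x + f x * deriv g x) x := by
    intro x hx
    have h1 := (hg2 x hx).add ((hf1 x hx).mul (hg1 x hx))
    exact h1.congr_deriv (by ring)
  have hA₂d : ∀ x ∈ s, HasDerivAt
      (fun y => (deriv (deriv g) y + deriv f y * g y + f y * deriv g y) * Real.exp (-F y))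
      ((deriv (deriv (deriv g)) x + (deriv (deriv f) x * g x + deriv f x * deriv g x)
          + (deriv f x * deriv g x + f x * deriv (deriv g) x)) * Real.exp (-F x)
        + (deriv (deriv g) x + deriv f x * g x + f x * deriv g x)
            * (Real.exp (-F x) * (-f x))) x := by
    intro x hx
    exact (((hg3 x hx).add ((hf2 x hx).mul (hg1 x hx))).add
      ((hf1 x hx).mul (hg2 x hx))).mul ((hFd x hx).neg.exp)
  -- local inverse ψ of φ
  have hφC0 : ContDiffAt ℝ 2 φ 0 := hφC.contDiffAt (hs_open.mem_nhds h0s)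
  have hφd0 : HasDerivAt φ 1 0 := by
    have := hφd 0 h0s; rwa [hF0, Real.exp_zero] at this
  have hequiv : HasFDerivAt φ ((ContinuousLinearEquiv.refl ℝ ℝ : ℝ ≃L[ℝ] ℝ) : ℝ →L[ℝ] ℝ) 0 := by
    have h := hφd0.hasFDerivAt
    exact h.congr_fderiv (by ext x; simp)
  have hn12 : (2 : WithTop ℕ∞) ≠ 0 := by norm_num
  set ψ : ℝ → ℝ := hφC0.localInverse hequiv hn12 with hψdef
  have hψ0 : ψ 0 = 0 := by
    have := hφC0.localInverse_apply_image hequiv hn12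
    rwa [hφ0] at this
  have hψC : ContDiffAt ℝ 2 ψ 0 := by
    have := hφC0.to_localInverse hequiv hn12
    rwa [hφ0] at this
  have hψcont : ContinuousAt ψ 0 := hψC.continuousAt
  have hev2 : ∀ᶠ u in 𝓝 (0:ℝ), φ (ψ u) = u := by
    have := (hφC0.hasStrictFDerivAt' hequiv hn12).eventually_right_inverse
    rw [hφ0] at this
    exact this
  have hev1 : ∀ᶠ u in 𝓝 (0:ℝ), ψ u ∈ s := by
    have hmem : s ∈ 𝓝 (ψ 0) := by rw [hψ0]; exact hs_open.mem_nhds h0s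
    exact hψcont.eventually_mem hmem
  have hev3 : ∀ᶠ u in 𝓝 (0:ℝ), DifferentiableAt ℝ ψ u := by
    have h2 := hψC.eventually (by simp)
    exact h2.mono fun u hu => hu.differentiableAt hn12
  have hev4 : ∀ᶠ u in 𝓝 (0:ℝ), HasDerivAt ψ (Real.exp (-F (ψ u))) u := by
    filter_upwards [hev1, hev3, hev2.eventually_nhds] with u hu1 hu3 hu2
    have hdu : HasDerivAt ψ (deriv ψ u) u := hu3.hasDerivAt
    have hcomp : HasDerivAt (φ ∘ ψ) (Real.exp (F (ψ u)) * deriv ψ u) u :=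
      (hφd (ψ u) hu1).comp u hdu
    have hid : HasDerivAt (φ ∘ ψ) 1 u := by
      have heq : (φ ∘ ψ) =ᶠ[𝓝 u] id := hu2.mono fun v hv => hv
      exact (hasDerivAt_id u).congr_of_eventuallyEq heq
    have hEq : Real.exp (F (ψ u)) * deriv ψ u = 1 := hcomp.unique hid
    have hd : deriv ψ u = Real.exp (-F (ψ u)) := by
      rw [Real.exp_neg]
      exact eq_inv_of_mul_eq_one_left (by linarith [hEq] : deriv ψ u * Real.exp (F (ψ u)) = 1)
    rwa [hd] at hdu
  -- gt agrees with (g·e^F) ∘ ψ near 0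
  have hev5 : gt =ᶠ[𝓝 (0:ℝ)] fun u => g (ψ u) * Real.exp (F (ψ u)) := by
    filter_upwards [hev1, hev2] with u h1 h2
    calc gt u = gt (φ (ψ u)) := by rw [h2]
      _ = g (ψ u) * Real.exp (F (ψ u)) := hgt (ψ u) h1
  -- first derivative
  have claim1 : deriv gt =ᶠ[𝓝 (0:ℝ)] fun u => deriv g (ψ u) + f (ψ u) * g (ψ u) := by
    refine hev5.deriv.trans ?_
    filter_upwards [hev1, hev4] with u h1 h4
    have hc : HasDerivAt (fun u => g (ψ u) * Real.exp (F (ψ u)))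
        (((deriv g (ψ u) + f (ψ u) * g (ψ u)) * Real.exp (F (ψ u))) * Real.exp (-F (ψ u))) u :=
      (hGd (ψ u) h1).comp u h4
    rw [hc.deriv, mul_assoc, ← Real.exp_add, add_neg_cancel, Real.exp_zero, mul_one]
  -- second derivative
  have claim2 : deriv (deriv gt) =ᶠ[𝓝 (0:ℝ)]
      fun u => (deriv (deriv g) (ψ u) + deriv f (ψ u) * g (ψ u) + f (ψ u) * deriv g (ψ u))
        * Real.exp (-F (ψ u)) := by
    refine claim1.deriv.trans ?_
    filter_upwards [hev1, hev4] with u h1 h4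
    have hc : HasDerivAt (fun u => deriv g (ψ u) + f (ψ u) * g (ψ u))
        ((deriv (deriv g) (ψ u) + deriv f (ψ u) * g (ψ u) + f (ψ u) * deriv g (ψ u))
          * Real.exp (-F (ψ u))) u :=
      (hA₁d (ψ u) h1).comp u h4
    rw [hc.deriv]
  -- third derivative
  have hψd0 : HasDerivAt ψ (Real.exp (-F (ψ 0))) 0 := hev4.self_of_nhds
  have claim3 : deriv (deriv (deriv gt)) 0 =
      ((deriv (deriv (deriv g)) 0 + (deriv (deriv f) 0 * g 0 + deriv f 0 * deriv g 0)
          + (deriv f 0 * deriv g 0 + f 0 * deriv (deriv g) 0)) * Real.exp (-F 0)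
        + (deriv (deriv g) 0 + deriv f 0 * g 0 + f 0 * deriv g 0)
            * (Real.exp (-F 0) * (-f 0))) * Real.exp (-F (ψ 0)) := by
    rw [claim2.deriv.self_of_nhds]
    have hc := (hA₂d (ψ 0) (by rw [hψ0]; exact h0s)).comp 0 hψd0
    rw [hψ0] at hc
    have := hc.deriv
    rw [hψ0]
    exact this
  have key1 : deriv gt 0 = deriv g 0 := by
    rw [claim1.self_of_nhds]; simp only [hψ0, hg0]; ring
  refine ⟨key1, ?_, ?_⟩
  · rw [iteratedDeriv_succ, iteratedDeriv_one, iteratedDeriv_succ, iteratedDeriv_one,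
      claim2.self_of_nhds]
    simp only [hψ0, hg0, hF0, neg_zero, Real.exp_zero]
    ring
  · intro hgd1
    rw [iteratedDeriv_succ, iteratedDeriv_succ, iteratedDeriv_one,
      iteratedDeriv_succ, iteratedDeriv_succ, iteratedDeriv_one, claim3, hψ0, hg0, hF0, hgd1]
    simp; ring
end

section
/- For f(x) = 5a₆x/(3 − a₆x²) and g(x) = (x − (2/9)a₆x³)(1 − (a₆/3)x²), the identity f(x)g(x) + g'(x) = 1 holds for all x with 3 − a₆x² ≠ 0. -/
/-- For `f(x) = 5a₆x/(3 - a₆x²)` and `g(x) = (x - (2/9)a₆x³)(1 - (a₆/3)x²)`,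
the isochronicity identity `f·g + g' = 1` holds wherever `3 - a₆x² ≠ 0`. -/
theorem cubic_case_I_isochronicity (a₆ : ℝ) :
    ∀ x : ℝ, 3 - a₆ * x^2 ≠ 0 →
      (5 * a₆ * x / (3 - a₆ * x^2)) *
        ((x - (2/9) * a₆ * x^3) * (1 - (a₆/3) * x^2)) +
      deriv (fun y => (y - (2/9) * a₆ * y^3) * (1 - (a₆/3) * y^2)) x = 1 := by
  intro x hx
  have h : HasDerivAt (fun y => (y - (2/9) * a₆ * y^3) * (1 - (a₆/3) * y^2))
      ((1 - (2/9) * a₆ * (3 * x^2)) * (1 - (a₆/3) * x^2)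
        + (x - (2/9) * a₆ * x^3) * (-(a₆/3) * (2 * x))) x := by
    have h1 : HasDerivAt (fun y : ℝ => y - (2/9) * a₆ * y^3)
        (1 - (2/9) * a₆ * (3 * x^2)) x := by
      exact ((hasDerivAt_id x).sub (((hasDerivAt_pow 3 x).const_mul ((2/9) * a₆)))).congr_deriv (by norm_num)
    have h2 : HasDerivAt (fun y : ℝ => 1 - (a₆/3) * y^2)
        (-(a₆/3) * (2 * x)) x := by
      have := ((hasDerivAt_pow 2 x).const_mul ((a₆/3))).const_sub 1
      simpa using this.congr_deriv (by ring)
    exact h1.mul h2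
  rw [h.deriv]
  field_simp
  ring
end
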